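/- arXiv:2408.01413 — 2 statements merged into one kernel-verified Lean document; each statement's English description precedes it below -/
import Mathlib

section
/- Suppose 0 < τ₁ < τ₂, and let σ¹ and σ² be strategy distributions of Wardrop equilibria for tolls τ₁ and τ₂ respectively (all other model data fixed). Then ℓ_δ(σ²) ≥ ℓ_δ(σ¹), σ²_toll ≤ σ¹_toll, and σ²_pool ≥ σ¹_pool. -/
open MeasureTheory Set

namespace HOT

inductive Action : Type
  | toll
  | pool
  | o
  deriving DecidableEq

instance : MeasurableSpace Action := ⊤

/-- The rectangle of preference parameters `[0,β̄] × [0,γ̄]`. -/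
def Rbox (βb γb : ℝ) : Set (ℝ × ℝ) := Icc (0:ℝ) βb ×ˢ Icc (0:ℝ) γb

/-- The strategy distribution of a strategy profile `s`: the `f`-mass of agents
in the rectangle choosing each action. -/
noncomputable def stratDist (βb γb : ℝ) (f : ℝ × ℝ → ℝ) (s : ℝ × ℝ → Action)
    (a : Action) : ℝ :=
  ∫ p in Rbox βb γb ∩ s ⁻¹' {a}, f p

/-- HOT-lane vehicle flow induced by a strategy distribution. -/
noncomputable def xh (A : ℕ) (D : ℝ) (σ : Action → ℝ) : ℝ :=
  (σ Action.toll + σ Action.pool / (A : ℝ)) * D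

/-- Ordinary-lane vehicle flow induced by a strategy distribution. -/
noncomputable def xo (D : ℝ) (σ : Action → ℝ) : ℝ := σ Action.o * D

/-- Latency difference `ℓ_δ(σ) = ℓ_o(x_o(σ)) − ℓ_h(x_h(σ))`. -/
noncomputable def ldiff (ℓo ℓh : ℝ → ℝ) (A : ℕ) (D : ℝ) (σ : Action → ℝ) : ℝ :=
  ℓo (xo D σ) - ℓh (xh A D σ)

/-- The cost of agent `(β,γ)` for each action, given a strategy distribution. -/
noncomputable def cost (ℓo ℓh : ℝ → ℝ) (A : ℕ) (D τ : ℝ) (σ : Action → ℝ)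
    (β γ : ℝ) : Action → ℝ
  | Action.toll => β * ℓh (xh A D σ) + τ
  | Action.pool => β * ℓh (xh A D σ) + γ
  | Action.o => β * ℓo (xo D σ)

/-- Wardrop equilibrium: every agent's action minimizes its own cost. -/
def IsWardrop (ℓo ℓh : ℝ → ℝ) (A : ℕ) (D τ βb γb : ℝ) (f : ℝ × ℝ → ℝ)
    (s : ℝ × ℝ → Action) : Prop :=
  Measurable s ∧
  ∀ p ∈ Rbox βb γb, ∀ a : Action,
    cost ℓo ℓh A D τ (stratDist βb γb f s) p.1 p.2 (s p) ≤
      cost ℓo ℓh A D τ (stratDist βb γb f s) p.1 p.2 a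

/-- Threshold carpool share `σ†_pool = ∫₀^β̄ ∫₀^{min(τ,γ̄)·β/β̄} f`. -/
noncomputable def sigmaDagger (βb γb τ : ℝ) (f : ℝ × ℝ → ℝ) : ℝ :=
  ∫ β in (0:ℝ)..βb, ∫ γ in (0:ℝ)..(min τ γb * β / βb), f (β, γ)

/-- Threshold latency difference `ℓ† = ℓ_o((1−σ†)·D) − ℓ_h((σ†/A)·D)`. -/
noncomputable def ellDagger (ℓo ℓh : ℝ → ℝ) (A : ℕ) (D βb γb τ : ℝ)
    (f : ℝ × ℝ → ℝ) : ℝ :=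
  ℓo ((1 - sigmaDagger βb γb τ f) * D) - ℓh (sigmaDagger βb γb τ f / (A : ℝ) * D)

/-- Regime-B toll share as a function of the latency difference `δ`. -/
noncomputable def gB (τ βb γb : ℝ) (f : ℝ × ℝ → ℝ) (δ : ℝ) : ℝ :=
  ∫ γ in τ..γb, ∫ β in (τ / δ)..βb, f (β, γ)

/-- Regime-B carpool share as a function of the latency difference `δ`. -/
noncomputable def hB (τ βb : ℝ) (f : ℝ × ℝ → ℝ) (δ : ℝ) : ℝ :=
  ∫ γ in (0:ℝ)..τ, ∫ β in (γ / δ)..βb, f (β, γ)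

end HOT

namespace HOTAux
open HOT

lemma line_null (c : ℝ) : volume {p : ℝ × ℝ | p.2 = c * p.1} = 0 := by
  have h : {p : ℝ × ℝ | p.2 = c * p.1}
      = (LinearMap.ker ((LinearMap.snd ℝ ℝ ℝ) - c • (LinearMap.fst ℝ ℝ ℝ)) : Submodule ℝ (ℝ×ℝ)) := by
    ext p
    simp [LinearMap.mem_ker, sub_eq_zero, eq_comm]
  rw [h]
  apply Measure.addHaar_submodule
  intro htop
  have : ((1:ℝ), c+1) ∈ LinearMap.ker ((LinearMap.snd ℝ ℝ ℝ) - c • (LinearMap.fst ℝ ℝ ℝ)) := by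
    rw [htop]; trivial
  simp [LinearMap.mem_ker] at this

lemma snd_null : volume {p : ℝ × ℝ | p.2 = 0} = 0 := by
  simpa using line_null 0

variable {ℓo ℓh : ℝ → ℝ} {A : ℕ} {D βb γb τ : ℝ} {f : ℝ × ℝ → ℝ} {s : ℝ × ℝ → Action}

lemma toll_nec (hs : IsWardrop ℓo ℓh A D τ βb γb f s) {p : ℝ × ℝ} (hp : p ∈ Rbox βb γb)
    (h : s p = Action.toll) :
    τ ≤ p.2 ∧ τ ≤ p.1 * ldiff ℓo ℓh A D (stratDist βb γb f s) := by
  have h1 := hs.2 p hp Action.pool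
  have h2 := hs.2 p hp Action.o
  rw [h] at h1 h2
  simp only [cost, ldiff] at h1 h2 ⊢
  rw [mul_sub]
  exact ⟨by linarith, by linarith⟩

lemma pool_nec (hs : IsWardrop ℓo ℓh A D τ βb γb f s) {p : ℝ × ℝ} (hp : p ∈ Rbox βb γb)
    (h : s p = Action.pool) :
    p.2 ≤ τ ∧ p.2 ≤ p.1 * ldiff ℓo ℓh A D (stratDist βb γb f s) := by
  have h1 := hs.2 p hp Action.toll
  have h2 := hs.2 p hp Action.o
  rw [h] at h1 h2
  simp only [cost, ldiff] at h1 h2 ⊢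
  rw [mul_sub]
  exact ⟨by linarith, by linarith⟩

lemma o_nec (hs : IsWardrop ℓo ℓh A D τ βb γb f s) {p : ℝ × ℝ} (hp : p ∈ Rbox βb γb)
    (h : s p = Action.o) :
    p.1 * ldiff ℓo ℓh A D (stratDist βb γb f s) ≤ τ ∧
      p.1 * ldiff ℓo ℓh A D (stratDist βb γb f s) ≤ p.2 := by
  have h1 := hs.2 p hp Action.toll
  have h2 := hs.2 p hp Action.pool
  rw [h] at h1 h2
  simp only [cost, ldiff] at h1 h2 ⊢
  rw [mul_sub]
  exact ⟨by linarith, by linarith⟩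

lemma toll_suf (hs : IsWardrop ℓo ℓh A D τ βb γb f s) {p : ℝ × ℝ} (hp : p ∈ Rbox βb γb)
    (h1 : τ < p.2) (h2 : τ < p.1 * ldiff ℓo ℓh A D (stratDist βb γb f s)) :
    s p = Action.toll := by
  rcases hc : s p with _ | _ | _
  · rfl
  · exfalso
    have := hs.2 p hp Action.toll
    rw [hc] at this
    simp only [cost] at this
    linarith
  · exfalso
    have := hs.2 p hp Action.toll
    rw [hc] at this
    simp only [cost, ldiff] at this h2
    rw [mul_sub] at h2
    linarith

lemma pool_suf (hs : IsWardrop ℓo ℓh A D τ βb γb f s) {p : ℝ × ℝ} (hp : p ∈ Rbox βb γb)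
    (h1 : p.2 < τ) (h2 : p.2 < p.1 * ldiff ℓo ℓh A D (stratDist βb γb f s)) :
    s p = Action.pool := by
  rcases hc : s p with _ | _ | _
  · exfalso
    have := hs.2 p hp Action.pool
    rw [hc] at this
    simp only [cost] at this
    linarith
  · rfl
  · exfalso
    have := hs.2 p hp Action.pool
    rw [hc] at this
    simp only [cost, ldiff] at this h2
    rw [mul_sub] at h2
    linarith

lemma sd_nonneg (hms : Measurable s) (hf0 : ∀ p ∈ Rbox βb γb, 0 ≤ f p) (a : Action) :
    0 ≤ stratDist βb γb f s a :=
  setIntegral_nonneg ((measurableSet_Icc.prod measurableSet_Icc).inter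
    (hms MeasurableSpace.measurableSet_top)) (fun p hp => hf0 p hp.1)

lemma sd_union (hms : Measurable s) (hfi : IntegrableOn f (Rbox βb γb)) :
    ∫ p in Rbox βb γb ∩ (s ⁻¹' {Action.toll} ∪ s ⁻¹' {Action.pool}), f p
      = stratDist βb γb f s Action.toll + stratDist βb γb f s Action.pool := by
  rw [inter_union_distrib_left, setIntegral_union]
  · rfl
  · refine disjoint_left.2 ?_
    rintro p ⟨_, h1⟩ ⟨_, h2⟩
    simp only [mem_preimage, mem_singleton_iff] at h1 h2
    rw [h1] at h2
    simp at h2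
  · exact (measurableSet_Icc.prod measurableSet_Icc).inter (hms MeasurableSpace.measurableSet_top)
  · exact hfi.mono_set inter_subset_left
  · exact hfi.mono_set inter_subset_left

lemma sd_sum (hms : Measurable s) (hfi : IntegrableOn f (Rbox βb γb)) :
    stratDist βb γb f s Action.toll + stratDist βb γb f s Action.pool
      + stratDist βb γb f s Action.o = ∫ p in Rbox βb γb, f p := by
  have hcover : Rbox βb γb ∩ (s ⁻¹' {Action.toll} ∪ s ⁻¹' {Action.pool})
      ∪ Rbox βb γb ∩ s ⁻¹' {Action.o} = Rbox βb γb := by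
    ext p
    simp only [mem_union, mem_inter_iff, mem_preimage, mem_singleton_iff]
    cases h : s p <;> tauto
  rw [← sd_union hms hfi, stratDist, ← setIntegral_union]
  · rw [hcover]
  · refine disjoint_left.2 ?_
    rintro p ⟨_, h1 | h1⟩ ⟨_, h2⟩ <;>
    · simp only [mem_preimage, mem_singleton_iff] at h1 h2
      rw [h1] at h2
      simp at h2
  · exact (measurableSet_Icc.prod measurableSet_Icc).inter (hms MeasurableSpace.measurableSet_top)
  · exact hfi.mono_set inter_subset_left
  · exact hfi.mono_set inter_subset_left

lemma sd_le {S T : Set (ℝ × ℝ)} (hT : MeasurableSet T) (hTR : T ⊆ Rbox βb γb)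
    (hfi : IntegrableOn f (Rbox βb γb)) (hf0 : ∀ p ∈ Rbox βb γb, 0 ≤ f p)
    (hST : volume (S \ T) = 0) :
    ∫ p in S, f p ≤ ∫ p in T, f p := by
  refine setIntegral_mono_set (hfi.mono_set hTR) ?_ (MeasureTheory.ae_le_set.2 hST)
  exact (ae_restrict_iff' hT).2 (Filter.Eventually.of_forall fun p hp => hf0 p (hTR hp))

lemma delta_pos (hD : 0 < D) (hom : StrictMonoOn ℓo (Ici 0)) (hfree : ℓo 0 = ℓh 0)
    (hfi : IntegrableOn f (Rbox βb γb)) (hf0 : ∀ p ∈ Rbox βb γb, 0 ≤ f p)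
    (hfint : (∫ p in Rbox βb γb, f p) = 1)
    (hτ : 0 < τ) (hs : IsWardrop ℓo ℓh A D τ βb γb f s) :
    0 < ldiff ℓo ℓh A D (stratDist βb γb f s) := by
  by_contra hle
  push_neg at hle
  have hT : stratDist βb γb f s Action.toll = 0 := by
    have he : Rbox βb γb ∩ s ⁻¹' {Action.toll} = ∅ := by
      ext p
      simp only [mem_inter_iff, mem_preimage, mem_singleton_iff, mem_empty_iff_false, iff_false,
        not_and]
      intro hp hpt
      have h2 := (toll_nec hs hp hpt).2
      have hβ : 0 ≤ p.1 := hp.1.1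
      nlinarith
    rw [stratDist, he]
    simp
  have hP : stratDist βb γb f s Action.pool = 0 := by
    have hsub : Rbox βb γb ∩ s ⁻¹' {Action.pool} ⊆ {p : ℝ × ℝ | p.2 = 0} := by
      rintro p ⟨hp, hpt⟩
      simp only [mem_preimage, mem_singleton_iff] at hpt
      have h2 := (pool_nec hs hp hpt).2
      have hβ : 0 ≤ p.1 := hp.1.1
      have hγ : 0 ≤ p.2 := hp.2.1
      have : p.1 * ldiff ℓo ℓh A D (stratDist βb γb f s) ≤ 0 := by nlinarith
      simp only [mem_setOf_eq]
      linarith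
    rw [stratDist, Measure.restrict_eq_zero.2 (measure_mono_null hsub snd_null),
      integral_zero_measure]
  have hO : stratDist βb γb f s Action.o = 1 := by
    have hsum := sd_sum hs.1 hfi
    rw [hfint] at hsum
    linarith
  have hcalc : ldiff ℓo ℓh A D (stratDist βb γb f s) = ℓo D - ℓh 0 := by
    simp [ldiff, xo, xh, hT, hP, hO]
  have hlt : ℓo 0 < ℓo D := hom (mem_Ici.2 le_rfl) (mem_Ici.2 hD.le) hD
  rw [hcalc, ← hfree] at hle
  linarith

lemma ldiff_anti {σ σ' : Action → ℝ}
    (hD : 0 < D) (hA2 : (2:ℝ) ≤ (A:ℝ))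
    (hom : StrictMonoOn ℓo (Ici 0)) (hhm : StrictMonoOn ℓh (Ici 0))
    (hT0 : 0 ≤ σ' Action.toll) (hP0 : 0 ≤ σ' Action.pool) (hO0 : 0 ≤ σ Action.o)
    (hsum : σ Action.toll + σ Action.pool + σ Action.o = 1)
    (hsum' : σ' Action.toll + σ' Action.pool + σ' Action.o = 1)
    (hT : σ' Action.toll ≤ σ Action.toll)
    (hH : σ' Action.toll + σ' Action.pool ≤ σ Action.toll + σ Action.pool) :
    ldiff ℓo ℓh A D σ ≤ ldiff ℓo ℓh A D σ' := by
  have hApos : (0:ℝ) < (A:ℝ) := by linarith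
  have h9 : 0 ≤ 1 - 1/(A:ℝ) := by
    rw [sub_nonneg, div_le_one hApos]; linarith
  have key : σ' Action.toll + σ' Action.pool / A ≤ σ Action.toll + σ Action.pool / A := by
    rw [← sub_nonneg]
    have heq : σ Action.toll + σ Action.pool / A - (σ' Action.toll + σ' Action.pool / A)
        = (σ Action.toll - σ' Action.toll) * (1 - 1/(A:ℝ))
          + ((σ Action.toll + σ Action.pool) - (σ' Action.toll + σ' Action.pool)) * (1/(A:ℝ)) := by
      field_simp
      ring
    rw [heq]
    have hx := mul_nonneg (sub_nonneg.2 hT) h9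
    have hy := mul_nonneg (sub_nonneg.2 hH) (by positivity : (0:ℝ) ≤ 1/(A:ℝ))
    linarith
  have hxh : xh A D σ' ≤ xh A D σ := mul_le_mul_of_nonneg_right key hD.le
  have hxh0 : 0 ≤ xh A D σ' :=
    mul_nonneg (add_nonneg hT0 (div_nonneg hP0 hApos.le)) hD.le
  have hoo : σ Action.o ≤ σ' Action.o := by linarith
  have hxo : xo D σ ≤ xo D σ' := mul_le_mul_of_nonneg_right hoo hD.le
  have hxo0 : 0 ≤ xo D σ := mul_nonneg hO0 hD.le
  have h1 : ℓo (xo D σ) ≤ ℓo (xo D σ') :=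
    hom.monotoneOn (mem_Ici.2 hxo0) (mem_Ici.2 (hxo0.trans hxo)) hxo
  have h2 : ℓh (xh A D σ') ≤ ℓh (xh A D σ) :=
    hhm.monotoneOn (mem_Ici.2 hxh0) (mem_Ici.2 (hxh0.trans hxh)) hxh
  simp only [ldiff]
  linarith

lemma ldiff_anti_strict {σ σ' : Action → ℝ}
    (hD : 0 < D) (hA2 : (2:ℝ) ≤ (A:ℝ))
    (hom : StrictMonoOn ℓo (Ici 0)) (hhm : StrictMonoOn ℓh (Ici 0))
    (hT0 : 0 ≤ σ' Action.toll) (hP0 : 0 ≤ σ' Action.pool) (hO0 : 0 ≤ σ Action.o)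
    (hsum : σ Action.toll + σ Action.pool + σ Action.o = 1)
    (hsum' : σ' Action.toll + σ' Action.pool + σ' Action.o = 1)
    (hT : σ' Action.toll < σ Action.toll)
    (hP : σ' Action.pool ≤ σ Action.pool) :
    ldiff ℓo ℓh A D σ < ldiff ℓo ℓh A D σ' := by
  have hApos : (0:ℝ) < (A:ℝ) := by linarith
  have key : σ' Action.toll + σ' Action.pool / A < σ Action.toll + σ Action.pool / A :=
    add_lt_add_of_lt_of_le hT ((div_le_div_iff_of_pos_right hApos).2 hP)
  have hxh : xh A D σ' < xh A D σ := mul_lt_mul_of_pos_right key hD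
  have hxh0 : 0 ≤ xh A D σ' :=
    mul_nonneg (add_nonneg hT0 (div_nonneg hP0 hApos.le)) hD.le
  have hoo : σ Action.o < σ' Action.o := by linarith
  have hxo : xo D σ < xo D σ' := mul_lt_mul_of_pos_right hoo hD
  have hxo0 : 0 ≤ xo D σ := mul_nonneg hO0 hD.le
  have h1 : ℓo (xo D σ) < ℓo (xo D σ') :=
    hom (mem_Ici.2 hxo0) (mem_Ici.2 (hxo0.trans hxo.le)) hxo
  have h2 : ℓh (xh A D σ') < ℓh (xh A D σ) :=
    hhm (mem_Ici.2 hxh0) (mem_Ici.2 (hxh0.trans hxh.le)) hxh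
  simp only [ldiff]
  linarith

end HOTAux

open HOT

/-- comparative statics in the toll — increasing the toll does not
decrease the latency difference or the carpool share, and does not increase
the toll-paying share. -/
theorem stmt12
    (ℓo ℓh : ℝ → ℝ) (A : ℕ) (D βb γb : ℝ) (f : ℝ × ℝ → ℝ)
    (hD : 0 < D) (hA : 2 ≤ A) (hβb : 0 < βb) (hγb : 0 < γb)
    (hoc : ContinuousOn ℓo (Ici 0)) (hom : StrictMonoOn ℓo (Ici 0))
    (hhc : ContinuousOn ℓh (Ici 0)) (hhm : StrictMonoOn ℓh (Ici 0))
    (hfree : ℓo 0 = ℓh 0)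
    (hfc : ContinuousOn f (Rbox βb γb)) (hfpos : ∀ p ∈ Rbox βb γb, 0 < f p)
    (hfint : (∫ p in Rbox βb γb, f p) = 1)
    (τ₁ τ₂ : ℝ) (hτ₁ : 0 < τ₁) (hττ : τ₁ < τ₂)
    (s₁ s₂ : ℝ × ℝ → Action)
    (hs₁ : IsWardrop ℓo ℓh A D τ₁ βb γb f s₁)
    (hs₂ : IsWardrop ℓo ℓh A D τ₂ βb γb f s₂) :
    ldiff ℓo ℓh A D (stratDist βb γb f s₁) ≤
      ldiff ℓo ℓh A D (stratDist βb γb f s₂) ∧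
    stratDist βb γb f s₂ Action.toll ≤ stratDist βb γb f s₁ Action.toll ∧
    stratDist βb γb f s₁ Action.pool ≤ stratDist βb γb f s₂ Action.pool := by
  have hR : MeasurableSet (Rbox βb γb) := measurableSet_Icc.prod measurableSet_Icc
  have hRc : IsCompact (Rbox βb γb) := isCompact_Icc.prod isCompact_Icc
  have hfi : IntegrableOn f (Rbox βb γb) := hfc.integrableOn_compact hRc
  have hf0 : ∀ p ∈ Rbox βb γb, 0 ≤ f p := fun p hp => (hfpos p hp).le
  have hτ₂ : 0 < τ₂ := hτ₁.trans hττ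
  have hA2 : (2:ℝ) ≤ (A:ℝ) := by exact_mod_cast hA
  have hδ₁pos := HOTAux.delta_pos hD hom hfree hfi hf0 hfint hτ₁ hs₁
  have hδ₂pos := HOTAux.delta_pos hD hom hfree hfi hf0 hfint hτ₂ hs₂
  have hsum₁ : stratDist βb γb f s₁ Action.toll + stratDist βb γb f s₁ Action.pool
      + stratDist βb γb f s₁ Action.o = 1 := by
    rw [HOTAux.sd_sum hs₁.1 hfi, hfint]
  have hsum₂ : stratDist βb γb f s₂ Action.toll + stratDist βb γb f s₂ Action.pool
      + stratDist βb γb f s₂ Action.o = 1 := by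
    rw [HOTAux.sd_sum hs₂.1 hfi, hfint]
  have hnn₁ := HOTAux.sd_nonneg (f := f) hs₁.1 hf0
  have hnn₂ := HOTAux.sd_nonneg (f := f) hs₂.1 hf0
  have hδ : ldiff ℓo ℓh A D (stratDist βb γb f s₁) ≤
      ldiff ℓo ℓh A D (stratDist βb γb f s₂) := by
    by_contra hcon
    push_neg at hcon
    have hTsub : Rbox βb γb ∩ s₂ ⁻¹' {Action.toll} ⊆ Rbox βb γb ∩ s₁ ⁻¹' {Action.toll} := by
      rintro p ⟨hp, hpt⟩
      simp only [mem_preimage, mem_singleton_iff] at hpt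
      obtain ⟨hγ, hβδ⟩ := HOTAux.toll_nec hs₂ hp hpt
      have hβpos : 0 < p.1 := by nlinarith
      refine ⟨hp, ?_⟩
      simp only [mem_preimage, mem_singleton_iff]
      exact HOTAux.toll_suf hs₁ hp (lt_of_lt_of_le hττ hγ)
        (by nlinarith [mul_pos hβpos (sub_pos.2 hcon)])
    have hHsub : (Rbox βb γb ∩ (s₂ ⁻¹' {Action.toll} ∪ s₂ ⁻¹' {Action.pool})) \
        (Rbox βb γb ∩ (s₁ ⁻¹' {Action.toll} ∪ s₁ ⁻¹' {Action.pool})) ⊆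
          {p : ℝ × ℝ | p.2 = 0} := by
      rintro p ⟨⟨hp, hpt⟩, hnot⟩
      simp only [mem_union, mem_preimage, mem_singleton_iff] at hpt
      simp only [mem_setOf_eq]
      by_contra hγ0
      have hγpos : 0 < p.2 := lt_of_le_of_ne hp.2.1 (Ne.symm hγ0)
      apply hnot
      refine ⟨hp, ?_⟩
      simp only [mem_union, mem_preimage, mem_singleton_iff]
      rcases hpt with hpt | hpp
      · left
        have hmem := hTsub ⟨hp, by simpa using hpt⟩
        simpa using hmem.2
      · obtain ⟨hγτ, hγβδ⟩ := HOTAux.pool_nec hs₂ hp hpp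
        have hβpos : 0 < p.1 := by nlinarith [hp.1.1]
        rcases hc : s₁ p with _ | _ | _
        · left; rfl
        · right; rfl
        · exfalso
          obtain ⟨_, h2⟩ := HOTAux.o_nec hs₁ hp hc
          nlinarith [mul_lt_mul_of_pos_left hcon hβpos]
    have hT21 : stratDist βb γb f s₂ Action.toll ≤ stratDist βb γb f s₁ Action.toll := by
      apply HOTAux.sd_le (hR.inter (hs₁.1 MeasurableSpace.measurableSet_top))
        inter_subset_left hfi hf0
      rw [Set.diff_eq_empty.2 hTsub]
      exact measure_empty
    have hH21 : stratDist βb γb f s₂ Action.toll + stratDist βb γb f s₂ Action.pool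
        ≤ stratDist βb γb f s₁ Action.toll + stratDist βb γb f s₁ Action.pool := by
      rw [← HOTAux.sd_union hs₁.1 hfi, ← HOTAux.sd_union hs₂.1 hfi]
      apply HOTAux.sd_le (hR.inter ((hs₁.1 MeasurableSpace.measurableSet_top).union
        (hs₁.1 MeasurableSpace.measurableSet_top))) inter_subset_left hfi hf0
      exact measure_mono_null hHsub HOTAux.snd_null
    have hmono := HOTAux.ldiff_anti hD hA2 hom hhm (hnn₂ _) (hnn₂ _) (hnn₁ _)
      hsum₁ hsum₂ hT21 hH21
    linarith
  have hP : stratDist βb γb f s₁ Action.pool ≤ stratDist βb γb f s₂ Action.pool := by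
    apply HOTAux.sd_le (hR.inter (hs₂.1 MeasurableSpace.measurableSet_top))
      inter_subset_left hfi hf0
    refine measure_mono_null ?_ (measure_union_null HOTAux.snd_null
      (HOTAux.line_null (ldiff ℓo ℓh A D (stratDist βb γb f s₂))))
    rintro p ⟨⟨hp, hpp⟩, hnot⟩
    simp only [mem_preimage, mem_singleton_iff] at hpp
    obtain ⟨hγτ, hγβδ⟩ := HOTAux.pool_nec hs₁ hp hpp
    simp only [mem_union, mem_setOf_eq]
    by_contra hh
    push_neg at hh
    obtain ⟨h0, hline⟩ := hh
    have hγpos : 0 < p.2 := lt_of_le_of_ne hp.2.1 (Ne.symm h0)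
    have hβ : 0 ≤ p.1 := hp.1.1
    have hle2 : p.2 ≤ p.1 * ldiff ℓo ℓh A D (stratDist βb γb f s₂) :=
      hγβδ.trans (mul_le_mul_of_nonneg_left hδ hβ)
    have hlt2 : p.2 < p.1 * ldiff ℓo ℓh A D (stratDist βb γb f s₂) :=
      lt_of_le_of_ne hle2 (fun h => hline (by rw [h, mul_comm]))
    refine hnot ⟨hp, ?_⟩
    simp only [mem_preimage, mem_singleton_iff]
    exact HOTAux.pool_suf hs₂ hp (lt_of_le_of_lt hγτ hττ) hlt2
  have hT : stratDist βb γb f s₂ Action.toll ≤ stratDist βb γb f s₁ Action.toll := by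
    by_contra hcon
    push_neg at hcon
    have hmono := HOTAux.ldiff_anti_strict hD hA2 hom hhm (hnn₁ _) (hnn₁ _) (hnn₂ _)
      hsum₂ hsum₁ hcon hP
    linarith
  exact ⟨hδ, hT, hP⟩
end

section
/- Assume 0 < τ ≤ γ̄. For δ ≥ τ/β̄ define g(δ) = ∫_τ^γ̄ ∫_{τ/δ}^β̄ f(β,γ) dβ dγ and h(δ) = ∫₀^τ ∫_{γ/δ}^β̄ f(β,γ) dβ dγ. Then g and h are continuous and nondecreasing on [τ/β̄, ∞), and the map δ ↦ δ − [ℓ_o((1 − g(δ) − h(δ))·D) − ℓ_h((g(δ) + h(δ)/A)·D)] is continuous and strictly increasing on [τ/β̄, ∞). -/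
open MeasureTheory Set

open HOT

namespace Stmt16Aux

variable {βb : ℝ} {fc : ℝ × ℝ → ℝ}

/-- partial inner integral -/
noncomputable def Psi (βb : ℝ) (fc : ℝ × ℝ → ℝ) (a γ : ℝ) : ℝ :=
  ∫ β in a..βb, fc (β, γ)

lemma psi_cont (hfc : Continuous fc) :
    Continuous fun p : ℝ × ℝ => Psi βb fc p.1 p.2 := by
  have key : ∀ a γ : ℝ, Psi βb fc a γ =
      (∫ t in (0:ℝ)..βb, fc (t, γ)) - ∫ t in (0:ℝ)..a, fc (t, γ) := by
    intro a γ
    have hi : ∀ u v : ℝ, IntervalIntegrable (fun t => fc (t, γ)) volume u v :=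
      fun u v => (hfc.comp (by continuity)).intervalIntegrable u v
    have := intervalIntegral.integral_add_adjacent_intervals (hi 0 a) (hi a βb)
    unfold Psi; linarith
  have huc : Continuous (Function.uncurry fun (p : ℝ × ℝ) (t : ℝ) => fc (t, p.2)) := by
    have : Continuous fun q : (ℝ × ℝ) × ℝ => (q.2, q.1.2) :=
      continuous_snd.prodMk (continuous_snd.comp continuous_fst)
    exact hfc.comp this
  have h2 : Continuous fun p : ℝ × ℝ => ∫ t in (0:ℝ)..βb, fc (t, p.2) :=
    intervalIntegral.continuous_parametric_intervalIntegral_of_continuous' huc 0 βb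
  have h3 : Continuous fun p : ℝ × ℝ => ∫ t in (0:ℝ)..p.1, fc (t, p.2) :=
    intervalIntegral.continuous_parametric_intervalIntegral_of_continuous huc continuous_fst
  have heq : (fun p : ℝ × ℝ => Psi βb fc p.1 p.2) =
      fun p : ℝ × ℝ => (∫ t in (0:ℝ)..βb, fc (t, p.2)) -
        ∫ t in (0:ℝ)..p.1, fc (t, p.2) := by
    funext p; rw [key p.1 p.2]
  rw [heq]
  exact h2.sub h3

lemma psi_antitone (hfc : Continuous fc) (hpos : ∀ p, 0 ≤ fc p) {a a' : ℝ}
    (h : a ≤ a') (γ : ℝ) : Psi βb fc a' γ ≤ Psi βb fc a γ := by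
  have hi : ∀ u v : ℝ, IntervalIntegrable (fun t => fc (t, γ)) volume u v :=
    fun u v => (hfc.comp (by continuity)).intervalIntegrable u v
  have hadd := intervalIntegral.integral_add_adjacent_intervals (hi a a') (hi a' βb)
  have hnn : 0 ≤ ∫ t in a..a', fc (t, γ) :=
    intervalIntegral.integral_nonneg h (fun x _ => hpos _)
  unfold Psi; linarith

lemma psi_nonneg (hpos : ∀ p, 0 ≤ fc p) {a : ℝ} (h : a ≤ βb) (γ : ℝ) :
    0 ≤ Psi βb fc a γ :=
  intervalIntegral.integral_nonneg h (fun x _ => hpos _)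

end Stmt16Aux

open Stmt16Aux

set_option maxHeartbeats 1000000 in
/-- regime-B best-response shares g, h are continuous and
nondecreasing on [τ/β̄, ∞), and δ ↦ δ − ℓ_δ(best response to δ) is continuous
and strictly increasing there. -/
theorem stmt16
    (ℓo ℓh : ℝ → ℝ) (A : ℕ) (D τ βb γb : ℝ) (f : ℝ × ℝ → ℝ)
    (hD : 0 < D) (hA : 2 ≤ A) (hβb : 0 < βb) (hγb : 0 < γb)
    (hoc : ContinuousOn ℓo (Ici 0)) (hom : StrictMonoOn ℓo (Ici 0))
    (hhc : ContinuousOn ℓh (Ici 0)) (hhm : StrictMonoOn ℓh (Ici 0))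
    (hfree : ℓo 0 = ℓh 0)
    (hfc : ContinuousOn f (Rbox βb γb)) (hfpos : ∀ p ∈ Rbox βb γb, 0 < f p)
    (hfint : (∫ p in Rbox βb γb, f p) = 1)
    (hτ : 0 < τ) (hτγ : τ ≤ γb)
    (F : ℝ → ℝ)
    (hF : F = fun δ =>
      δ - (ℓo ((1 - gB τ βb γb f δ - hB τ βb f δ) * D) -
            ℓh ((gB τ βb γb f δ + hB τ βb f δ / (A : ℝ)) * D))) :
    ContinuousOn (gB τ βb γb f) (Ici (τ / βb)) ∧
    MonotoneOn (gB τ βb γb f) (Ici (τ / βb)) ∧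
    ContinuousOn (hB τ βb f) (Ici (τ / βb)) ∧
    MonotoneOn (hB τ βb f) (Ici (τ / βb)) ∧
    ContinuousOn F (Ici (τ / βb)) ∧
    StrictMonoOn F (Ici (τ / βb)) := by
  have hc : 0 < τ / βb := div_pos hτ hβb
  set c : ℝ := τ / βb with hcdef
  -- the clamped density
  set ft : ℝ × ℝ → ℝ := fun p => f (max 0 (min p.1 βb), max 0 (min p.2 γb)) with hftdef
  have hmaps : ∀ p : ℝ × ℝ, (max 0 (min p.1 βb), max 0 (min p.2 γb)) ∈ Rbox βb γb := by
    intro p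
    exact ⟨⟨le_max_left _ _, max_le hβb.le (min_le_right _ _)⟩,
      ⟨le_max_left _ _, max_le hγb.le (min_le_right _ _)⟩⟩
  have hftc : Continuous ft := by
    apply hfc.comp_continuous _ hmaps
    exact (continuous_const.max (continuous_fst.min continuous_const)).prodMk
      (continuous_const.max (continuous_snd.min continuous_const))
  have hftnn : ∀ p, 0 ≤ ft p := fun p => (hfpos _ (hmaps p)).le
  have hfteq : ∀ p ∈ Rbox βb γb, ft p = f p := by
    rintro ⟨x, y⟩ ⟨⟨h1, h2⟩, ⟨h3, h4⟩⟩
    simp only [hftdef, min_eq_left h2, max_eq_right h1, min_eq_left h4, max_eq_right h3]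
  -- Psi facts
  have hPsiC : Continuous fun p : ℝ × ℝ => Psi βb ft p.1 p.2 := psi_cont hftc
  have hPsiCγ : ∀ a : ℝ, Continuous fun γ => Psi βb ft a γ := by
    intro a
    have heq : (fun γ => Psi βb ft a γ) =
        (fun p : ℝ × ℝ => Psi βb ft p.1 p.2) ∘ (fun γ => (a, γ)) := rfl
    rw [heq]
    exact hPsiC.comp (Continuous.prodMk_right a)
  have hPsiComp : ∀ u v : ℝ × ℝ → ℝ, Continuous u → Continuous v →
      Continuous fun q : ℝ × ℝ => Psi βb ft (u q) (v q) := by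
    intro u v hu hv
    have heq : (fun q : ℝ × ℝ => Psi βb ft (u q) (v q)) =
        (fun p : ℝ × ℝ => Psi βb ft p.1 p.2) ∘ (fun q => (u q, v q)) := rfl
    rw [heq]
    exact hPsiC.comp (hu.prodMk hv)
  have hPsiComp1 : ∀ u : ℝ → ℝ, Continuous u →
      Continuous fun γ : ℝ => Psi βb ft (u γ) γ := by
    intro u hu
    have heq : (fun γ : ℝ => Psi βb ft (u γ) γ) =
        (fun p : ℝ × ℝ => Psi βb ft p.1 p.2) ∘ (fun γ => (u γ, γ)) := rfl
    rw [heq]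
    exact hPsiC.comp (hu.prodMk continuous_id)
  -- domain facts
  have hδpos : ∀ δ ∈ Ici c, 0 < δ := fun δ h => lt_of_lt_of_le hc h
  have hτδβ : ∀ δ ∈ Ici c, τ / δ ≤ βb := by
    intro δ h
    have hδ : 0 < δ := hδpos δ h
    have h' : τ / βb ≤ δ := h
    rw [div_le_iff₀ hβb] at h'
    rw [div_le_iff₀ hδ]
    nlinarith
  -- rewriting gB and hB via Psi
  have hgB : ∀ δ ∈ Ici c, gB τ βb γb f δ = ∫ γ in τ..γb, Psi βb ft (τ / δ) γ := by
    intro δ hδ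
    apply intervalIntegral.integral_congr
    intro γ hγ
    rw [uIcc_of_le hτγ] at hγ
    apply intervalIntegral.integral_congr
    intro β hβ
    rw [uIcc_of_le (hτδβ δ hδ)] at hβ
    have hmem : (β, γ) ∈ Rbox βb γb :=
      ⟨⟨le_trans (le_of_lt (div_pos hτ (hδpos δ hδ))) hβ.1, hβ.2⟩,
        ⟨le_trans hτ.le hγ.1, hγ.2⟩⟩
    exact (hfteq _ hmem).symm
  have hhB : ∀ δ ∈ Ici c, hB τ βb f δ = ∫ γ in (0:ℝ)..τ, Psi βb ft (γ / δ) γ := by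
    intro δ hδ
    apply intervalIntegral.integral_congr
    intro γ hγ
    rw [uIcc_of_le hτ.le] at hγ
    have hγδβ : γ / δ ≤ βb := by
      refine le_trans ?_ (hτδβ δ hδ)
      exact div_le_div_of_nonneg_right hγ.2 (hδpos δ hδ).le
    apply intervalIntegral.integral_congr
    intro β hβ
    rw [uIcc_of_le hγδβ] at hβ
    have hmem : (β, γ) ∈ Rbox βb γb :=
      ⟨⟨le_trans (div_nonneg hγ.1 (hδpos δ hδ).le) hβ.1, hβ.2⟩,
        ⟨hγ.1, le_trans hγ.2 hτγ⟩⟩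
    exact (hfteq _ hmem).symm
  -- continuity of gB
  have hmaxpos : ∀ δ : ℝ, (0:ℝ) < max δ c := fun δ => lt_of_lt_of_le hc (le_max_right _ _)
  have hdivc : Continuous fun δ : ℝ => τ / max δ c :=
    continuous_const.div (continuous_id.max continuous_const)
      (fun δ => (hmaxpos δ).ne')
  have hGc : ContinuousOn (gB τ βb γb f) (Ici c) := by
    have huc : Continuous (Function.uncurry fun (δ γ : ℝ) => Psi βb ft (τ / max δ c) γ) :=
      hPsiComp (fun q => τ / max q.1 c) (fun q => q.2)
        (hdivc.comp continuous_fst) continuous_snd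
    have hG' : Continuous fun δ => ∫ γ in τ..γb, Psi βb ft (τ / max δ c) γ :=
      intervalIntegral.continuous_parametric_intervalIntegral_of_continuous' huc τ γb
    apply hG'.continuousOn.congr
    intro δ hδ
    show gB τ βb γb f δ = ∫ γ in τ..γb, Psi βb ft (τ / max δ c) γ
    rw [hgB δ hδ, max_eq_left (mem_Ici.1 hδ)]
  have hHc : ContinuousOn (hB τ βb f) (Ici c) := by
    have huc : Continuous (Function.uncurry fun (δ γ : ℝ) => Psi βb ft (γ / max δ c) γ) :=
      hPsiComp (fun q => q.2 / max q.1 c) (fun q => q.2)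
        (continuous_snd.div ((continuous_id.max continuous_const).comp continuous_fst)
          (fun q => (hmaxpos q.1).ne')) continuous_snd
    have hH' : Continuous fun δ => ∫ γ in (0:ℝ)..τ, Psi βb ft (γ / max δ c) γ :=
      intervalIntegral.continuous_parametric_intervalIntegral_of_continuous' huc 0 τ
    apply hH'.continuousOn.congr
    intro δ hδ
    show hB τ βb f δ = ∫ γ in (0:ℝ)..τ, Psi βb ft (γ / max δ c) γ
    rw [hhB δ hδ]
    apply intervalIntegral.integral_congr
    intro γ _
    rw [max_eq_left (mem_Ici.1 hδ)]
  -- monotonicity of gB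
  have hGm : MonotoneOn (gB τ βb γb f) (Ici c) := by
    intro δ₁ h₁ δ₂ h₂ h12
    rw [hgB δ₁ h₁, hgB δ₂ h₂]
    apply intervalIntegral.integral_mono_on hτγ
      ((hPsiCγ _).intervalIntegrable _ _) ((hPsiCγ _).intervalIntegrable _ _)
    intro γ _
    exact psi_antitone hftc hftnn
      (div_le_div_of_nonneg_left hτ.le (hδpos δ₁ h₁) h12) γ
  have hHm : MonotoneOn (hB τ βb f) (Ici c) := by
    intro δ₁ h₁ δ₂ h₂ h12
    rw [hhB δ₁ h₁, hhB δ₂ h₂]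
    have hcont : ∀ δ : ℝ, Continuous fun γ => Psi βb ft (γ / δ) γ := fun δ =>
      hPsiComp1 (fun γ => γ / δ) (continuous_id.div_const δ)
    apply intervalIntegral.integral_mono_on hτ.le
      ((hcont δ₁).intervalIntegrable _ _) ((hcont δ₂).intervalIntegrable _ _)
    intro γ hγ
    apply psi_antitone hftc hftnn _ γ
    rw [div_le_div_iff₀ (hδpos δ₂ h₂) (hδpos δ₁ h₁)]
    exact mul_le_mul_of_nonneg_left h12 hγ.1
  -- nonnegativity
  have hg0 : ∀ δ ∈ Ici c, 0 ≤ gB τ βb γb f δ := by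
    intro δ hδ
    rw [hgB δ hδ]
    exact intervalIntegral.integral_nonneg hτγ
      (fun γ _ => psi_nonneg hftnn (hτδβ δ hδ) γ)
  have hh0 : ∀ δ ∈ Ici c, 0 ≤ hB τ βb f δ := by
    intro δ hδ
    rw [hhB δ hδ]
    refine intervalIntegral.integral_nonneg hτ.le (fun γ hγ => psi_nonneg hftnn ?_ γ)
    exact le_trans (div_le_div_of_nonneg_right hγ.2 (hδpos δ hδ).le) (hτδβ δ hδ)
  -- total mass one
  have hone : (∫ γ in (0:ℝ)..γb, Psi βb ft 0 γ) = 1 := by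
    have e0 : (∫ γ in (0:ℝ)..γb, Psi βb ft 0 γ) =
        ∫ γ in Icc (0:ℝ) γb, ∫ β in Icc (0:ℝ) βb, ft (β, γ) := by
      rw [intervalIntegral.integral_of_le hγb.le, ← integral_Icc_eq_integral_Ioc]
      apply setIntegral_congr_fun measurableSet_Icc
      intro γ _
      show Psi βb ft 0 γ = _
      rw [Psi, intervalIntegral.integral_of_le hβb.le, ← integral_Icc_eq_integral_Ioc]
    have hint : IntegrableOn (fun z : ℝ × ℝ => ft z.swap)
        ((Icc (0:ℝ) γb) ×ˢ (Icc (0:ℝ) βb)) ((volume : Measure ℝ).prod volume) := by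
      rw [← Measure.volume_eq_prod]
      exact ((hftc.comp continuous_swap).continuousOn).integrableOn_compact
        (isCompact_Icc.prod isCompact_Icc)
    have e1 : (∫ γ in Icc (0:ℝ) γb, ∫ β in Icc (0:ℝ) βb, ft (β, γ)) =
        ∫ z in (Icc (0:ℝ) γb) ×ˢ (Icc (0:ℝ) βb), ft z.swap
          ∂((volume : Measure ℝ).prod volume) :=
      (MeasureTheory.setIntegral_prod _ hint).symm
    have e2 : (∫ z in (Icc (0:ℝ) γb) ×ˢ (Icc (0:ℝ) βb), ft z.swap
          ∂((volume : Measure ℝ).prod volume)) =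
        ∫ z in Rbox βb γb, ft z := by
      rw [← Measure.prod_restrict]
      rw [MeasureTheory.integral_prod_swap]
      rw [Measure.prod_restrict, ← Measure.volume_eq_prod]
      rfl
    have e3 : (∫ z in Rbox βb γb, ft z) = ∫ z in Rbox βb γb, f z :=
      setIntegral_congr_fun (measurableSet_Icc.prod measurableSet_Icc) hfteq
    rw [e0, e1, e2, e3, hfint]
  -- sum bound
  have hii : ∀ u v : ℝ, IntervalIntegrable (fun γ => Psi βb ft 0 γ) volume u v :=
    fun u v => (hPsiCγ 0).intervalIntegrable u v
  have hsum1 : ∀ δ ∈ Ici c, gB τ βb γb f δ + hB τ βb f δ ≤ 1 := by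
    intro δ hδ
    have hgle : gB τ βb γb f δ ≤ ∫ γ in τ..γb, Psi βb ft 0 γ := by
      rw [hgB δ hδ]
      apply intervalIntegral.integral_mono_on hτγ
        ((hPsiCγ _).intervalIntegrable _ _) (hii _ _)
      intro γ _
      exact psi_antitone hftc hftnn (div_nonneg hτ.le (hδpos δ hδ).le) γ
    have hhle : hB τ βb f δ ≤ ∫ γ in (0:ℝ)..τ, Psi βb ft 0 γ := by
      rw [hhB δ hδ]
      have hcont : Continuous fun γ => Psi βb ft (γ / δ) γ :=
        hPsiComp1 (fun γ => γ / δ) (continuous_id.div_const δ)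
      apply intervalIntegral.integral_mono_on hτ.le
        (hcont.intervalIntegrable _ _) (hii _ _)
      intro γ hγ
      exact psi_antitone hftc hftnn (div_nonneg hγ.1 (hδpos δ hδ).le) γ
    have hadd := intervalIntegral.integral_add_adjacent_intervals (hii 0 τ) (hii τ γb)
    rw [hone] at hadd
    linarith
  refine ⟨hGc, hGm, hHc, hHm, ?_, ?_⟩
  · -- continuity of F
    subst hF
    have hAj : ContinuousOn (fun δ => (1 - gB τ βb γb f δ - hB τ βb f δ) * D) (Ici c) :=
      ((continuousOn_const.sub hGc).sub hHc).mul continuousOn_const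
    have hBj : ContinuousOn
        (fun δ => (gB τ βb γb f δ + hB τ βb f δ / (A : ℝ)) * D) (Ici c) :=
      (hGc.add (hHc.div_const _)).mul continuousOn_const
    have hm1 : MapsTo (fun δ => (1 - gB τ βb γb f δ - hB τ βb f δ) * D) (Ici c) (Ici 0) := by
      intro δ hδ
      have := hsum1 δ hδ
      exact mul_nonneg (by linarith) hD.le
    have hm2 : MapsTo (fun δ => (gB τ βb γb f δ + hB τ βb f δ / (A : ℝ)) * D)
        (Ici c) (Ici 0) := by
      intro δ hδ
      have h1 := hg0 δ hδ
      have h2 := hh0 δ hδ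
      have hA0 : (0:ℝ) ≤ (A : ℝ) := Nat.cast_nonneg A
      exact mul_nonneg (by positivity) hD.le
    exact continuousOn_id.sub ((hoc.comp hAj hm1).sub (hhc.comp hBj hm2))
  · -- strict monotonicity of F
    subst hF
    intro a ha b hb hab
    have hga := hGm ha hb hab.le
    have hha := hHm ha hb hab.le
    have hA0 : (0:ℝ) < (A : ℝ) := by
      exact_mod_cast lt_of_lt_of_le (by norm_num) hA
    have h1 : ℓo ((1 - gB τ βb γb f b - hB τ βb f b) * D) ≤
        ℓo ((1 - gB τ βb γb f a - hB τ βb f a) * D) := by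
      apply hom.monotoneOn
      · exact mul_nonneg (by linarith [hsum1 b hb]) hD.le
      · exact mul_nonneg (by linarith [hsum1 a ha]) hD.le
      · apply mul_le_mul_of_nonneg_right _ hD.le
        linarith
    have h2 : ℓh ((gB τ βb γb f a + hB τ βb f a / (A : ℝ)) * D) ≤
        ℓh ((gB τ βb γb f b + hB τ βb f b / (A : ℝ)) * D) := by
      apply hhm.monotoneOn
      · exact mul_nonneg (add_nonneg (hg0 a ha)
          (div_nonneg (hh0 a ha) hA0.le)) hD.le
      · exact mul_nonneg (add_nonneg (hg0 b hb)
          (div_nonneg (hh0 b hb) hA0.le)) hD.le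
      · apply mul_le_mul_of_nonneg_right _ hD.le
        exact add_le_add hga (div_le_div_of_nonneg_right hha hA0.le)
    dsimp only
    linarith
end
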